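/- Let C > 0 and σ > 0, let α > 1 be real, and let m, m' ∈ ℝ with |m − m'| ≤ C. Then the Rényi divergence of order α between the Gaussian measures N(m, C²σ²) and N(m', C²σ²) satisfies D_α(N(m, C²σ²) ‖ N(m', C²σ²)) ≤ α / (2σ²). That is, a Gaussian mechanism that adds noise of standard deviation Cσ to a statistic of ℓ2-sensitivity at most C satisfies (α, α/(2σ²))-Rényi differential privacy. -/

import Mathlib

open MeasureTheory ProbabilityTheory Real
open scoped NNReal ENNReal

/-- The Rényi divergence of order `α` between measures `μ` and `ν`,
`D_α(μ‖ν) = (1/(α−1)) · log ∫ (dμ/dν)^α dν`. -/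
noncomputable def renyiDiv {Ω : Type*} [MeasurableSpace Ω] (α : ℝ) (μ ν : Measure Ω) : ℝ :=
  (α - 1)⁻¹ * Real.log (∫⁻ x, (μ.rnDeriv ν x) ^ α ∂ν).toReal

lemma gaussianPDFReal_rpow_mul (v : ℝ≥0) (hv : v ≠ 0) (α m m' x : ℝ) :
    gaussianPDFReal m v x ^ α * gaussianPDFReal m' v x ^ (1 - α)
      = Real.exp (α * (α - 1) * (m - m') ^ 2 / (2 * v)) *
        gaussianPDFReal (α * m + (1 - α) * m') v x := by
  have hvpos : (0:ℝ) < v := by positivity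
  have hs : (0:ℝ) < (Real.sqrt (2 * π * v))⁻¹ := by
    have : (0:ℝ) < Real.sqrt (2 * π * v) := Real.sqrt_pos.2 (by positivity)
    positivity
  unfold gaussianPDFReal
  rw [Real.mul_rpow hs.le (Real.exp_nonneg _), Real.mul_rpow hs.le (Real.exp_nonneg _),
    ← Real.exp_mul, ← Real.exp_mul]
  have hc : ((Real.sqrt (2 * π * v))⁻¹) ^ α * ((Real.sqrt (2 * π * v))⁻¹) ^ (1 - α)
      = (Real.sqrt (2 * π * v))⁻¹ := by
    rw [← Real.rpow_add hs]
    norm_num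
  calc ((Real.sqrt (2 * π * v))⁻¹) ^ α * rexp (-(x - m) ^ 2 / (2 * v) * α) *
        (((Real.sqrt (2 * π * v))⁻¹) ^ (1 - α) * rexp (-(x - m') ^ 2 / (2 * v) * (1 - α)))
      = (((Real.sqrt (2 * π * v))⁻¹) ^ α * ((Real.sqrt (2 * π * v))⁻¹) ^ (1 - α)) *
        (rexp (-(x - m) ^ 2 / (2 * v) * α) * rexp (-(x - m') ^ 2 / (2 * v) * (1 - α))) := by
          ring
    _ = (Real.sqrt (2 * π * v))⁻¹ *
        rexp (-(x - m) ^ 2 / (2 * v) * α + -(x - m') ^ 2 / (2 * v) * (1 - α)) := by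
          rw [hc, Real.exp_add]
    _ = _ := by
          have hexp : -(x - m) ^ 2 / (2 * (v:ℝ)) * α + -(x - m') ^ 2 / (2 * (v:ℝ)) * (1 - α)
              = α * (α - 1) * (m - m') ^ 2 / (2 * (v:ℝ))
                + -(x - (α * m + (1 - α) * m')) ^ 2 / (2 * (v:ℝ)) := by
            field_simp
            ring
          rw [hexp, Real.exp_add]
          ring

lemma renyiDiv_gaussian (v : ℝ≥0) (hv : v ≠ 0) (α : ℝ) (hα : 1 < α) (m m' : ℝ) :
    renyiDiv α (gaussianReal m v) (gaussianReal m' v)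
      = α * (m - m') ^ 2 / (2 * v) := by
  have hvpos : (0:ℝ) < v := by positivity
  set f : ℝ → ℝ := gaussianPDFReal m v with hf
  set g : ℝ → ℝ := gaussianPDFReal m' v with hg
  have hfpos : ∀ x, 0 < f x := fun x => gaussianPDFReal_pos m v x hv
  have hgpos : ∀ x, 0 < g x := fun x => gaussianPDFReal_pos m' v x hv
  set h : ℝ → ℝ≥0∞ := fun x => ENNReal.ofReal (f x / g x) with hhdef
  have hfm : Measurable f := measurable_gaussianPDFReal m v
  have hgm : Measurable g := measurable_gaussianPDFReal m' v
  have hh : Measurable h := (hfm.div hgm).ennreal_ofReal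
  have hgPDFm : Measurable (gaussianPDF m' v) := measurable_gaussianPDF m' v
  have hμ : gaussianReal m v = (gaussianReal m' v).withDensity h := by
    rw [gaussianReal_of_var_ne_zero m hv, gaussianReal_of_var_ne_zero m' hv,
      ← withDensity_mul _ hgPDFm hh]
    congr 1
    funext x
    show ENNReal.ofReal (f x) = ENNReal.ofReal (g x) * ENNReal.ofReal (f x / g x)
    rw [← ENNReal.ofReal_mul (hgpos x).le, mul_div_cancel₀ _ (hgpos x).ne']
  have hrn : (gaussianReal m v).rnDeriv (gaussianReal m' v) =ᵐ[gaussianReal m' v] h := by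
    rw [hμ]; exact Measure.rnDeriv_withDensity _ hh
  set K : ℝ := Real.exp (α * (α - 1) * (m - m') ^ 2 / (2 * v)) with hK
  have hint : (∫⁻ x, ((gaussianReal m v).rnDeriv (gaussianReal m' v) x) ^ α
      ∂(gaussianReal m' v)) = ENNReal.ofReal K := by
    rw [lintegral_congr_ae (hrn.mono fun x hx => by rw [hx])]
    rw [gaussianReal_of_var_ne_zero m' hv,
      lintegral_withDensity_eq_lintegral_mul _ hgPDFm (hh.pow_const α)]
    have hpt : ∀ x, (gaussianPDF m' v * fun x => h x ^ α) x
        = ENNReal.ofReal (K * gaussianPDFReal (α * m + (1 - α) * m') v x) := by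
      intro x
      show ENNReal.ofReal (g x) * (ENNReal.ofReal (f x / g x)) ^ α = _
      rw [ENNReal.ofReal_rpow_of_pos (div_pos (hfpos x) (hgpos x)),
        ← ENNReal.ofReal_mul (hgpos x).le]
      congr 1
      rw [Real.div_rpow (hfpos x).le (hgpos x).le]
      rw [← gaussianPDFReal_rpow_mul v hv α m m' x]
      rw [Real.rpow_sub (hgpos x), Real.rpow_one]
      field_simp
      ring
    have hK0 : (0:ℝ) ≤ K := (Real.exp_pos _).le
    simp_rw [hpt, ENNReal.ofReal_mul hK0]
    rw [lintegral_const_mul' _ _ ENNReal.ofReal_ne_top,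
      lintegral_gaussianPDFReal_eq_one _ hv, mul_one]
  unfold renyiDiv
  rw [hint, ENNReal.toReal_ofReal (Real.exp_nonneg _), Real.log_exp]
  have hα1 : α - 1 ≠ 0 := by linarith
  field_simp

/-- **Per-step RDP guarantee of the Gaussian mechanism.** If `|m − m'| ≤ C`, then
`D_α(N(m, C²σ²) ‖ N(m', C²σ²)) ≤ α / (2σ²)`. -/
theorem gaussian_mechanism_rdp (C σ : ℝ) (hC : 0 < C) (hσ : 0 < σ) (α : ℝ) (hα : 1 < α)
    (m m' : ℝ) (h : |m - m'| ≤ C) :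
    renyiDiv α (gaussianReal m ⟨C ^ 2 * σ ^ 2, by positivity⟩)
        (gaussianReal m' ⟨C ^ 2 * σ ^ 2, by positivity⟩)
      ≤ α / (2 * σ ^ 2) := by
  have hv : (⟨C ^ 2 * σ ^ 2, by positivity⟩ : ℝ≥0) ≠ 0 := by
    intro hc
    have := congrArg (fun x : ℝ≥0 => (x : ℝ)) hc
    change C ^ 2 * σ ^ 2 = (0:ℝ) at this
    have h2 : (0:ℝ) < C ^ 2 * σ ^ 2 := by positivity
    linarith
  rw [renyiDiv_gaussian _ hv α hα m m']
  have hΔ : (m - m') ^ 2 ≤ C ^ 2 := by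
    have := abs_nonneg (m - m')
    nlinarith [sq_abs (m - m')]
  show α * (m - m') ^ 2 / (2 * (C ^ 2 * σ ^ 2)) ≤ α / (2 * σ ^ 2)
  rw [div_le_div_iff₀ (by positivity) (by positivity)]
  nlinarith [mul_le_mul_of_nonneg_right
    (mul_le_mul_of_nonneg_left hΔ (by linarith : (0:ℝ) ≤ α))
    (by positivity : (0:ℝ) ≤ 2 * σ ^ 2)]
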